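/- In the one-dimensional linear Gaussian bandit with Shannon entropy, for every i ∈ [K] and λ > 0, L^λ_i(m,d) = ((c_i^⊤ d c_i + P_i^{−1})^{−1}/(2λ)) · ( ∑_{j=1}^K ν^λ_j(f(m,d)) g_j(m,d)² (c_i^⊤ d c_j)² − ( ∑_{j=1}^K ν^λ_j(f(m,d)) g_j(m,d) (c_i^⊤ d c_j) )² ), where g_j(m,d) := ∫_ℝ r_j'(c_j^⊤m + (c_j^⊤ d c_j + P_j^{−1})^{1/2} z) φ(z) dz. -/

import Mathlib

open MeasureTheory

noncomputable section

namespace ARC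

variable {K p : ℕ}

/-- Standard Gaussian density. -/
def gauss (x : ℝ) : ℝ := (Real.sqrt (2 * Real.pi))⁻¹ * Real.exp (-x ^ 2 / 2)

/-- `ν^λ(a) = (∂_a S)(a/λ)`. -/
def nu (S : (Fin K → ℝ) → ℝ) (lam : ℝ) (a : Fin K → ℝ) : Fin K → ℝ :=
  fun j => fderiv ℝ S (lam⁻¹ • a) (Pi.single j 1)

/-- `η^λ(a) = (∂²_a S)(a/λ)`. -/
def eta (S : (Fin K → ℝ) → ℝ) (lam : ℝ) (a : Fin K → ℝ) : Fin K → Fin K → ℝ :=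
  fun j k => fderiv ℝ (fun x => fderiv ℝ S x (Pi.single k 1)) (lam⁻¹ • a) (Pi.single j 1)

/-- The maximum of a vector `a : Fin K → ℝ` (needs `0 < K`). -/
def fmax (hK : 0 < K) (a : Fin K → ℝ) : ℝ :=
  Finset.univ.sup' ⟨⟨0, hK⟩, Finset.mem_univ _⟩ a

/-- A smooth max approximator. -/
structure IsSmoothMax (hK : 0 < K) (S : (Fin K → ℝ) → ℝ) : Prop where
  smooth : ContDiff ℝ 3 S
  bddDeriv : ∃ C : ℝ, ∀ x, ∀ k ∈ ({1, 2, 3} : Finset ℕ), ‖iteratedFDeriv ℝ k S x‖ ≤ C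
  mono : Monotone S
  translate : ∀ (a : Fin K → ℝ) (c : ℝ), S (fun i => a i + c) = S a + c
  convex : ConvexOn ℝ Set.univ S
  approx : ∀ ε > (0 : ℝ), ∃ δ > (0 : ℝ), ∀ lam : ℝ, 0 < lam → lam < δ →
    ∀ a : Fin K → ℝ, |lam * S (lam⁻¹ • a) - fmax hK a| ≤ ε

/-- Partial gradient in `m` of `f_j` (matrix-valued `d`). -/
def gradMm (f : Fin K → (Fin p → ℝ) → (Fin p → Fin p → ℝ) → ℝ) (j : Fin K)
    (m : Fin p → ℝ) (d : Fin p → Fin p → ℝ) : Fin p → ℝ :=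
  fun k => fderiv ℝ (fun m' => f j m' d) m (Pi.single k 1)

/-- Partial gradient in the matrix variable `d` of `f_j`, as a `p × p` matrix. -/
def gradDm (f : Fin K → (Fin p → ℝ) → (Fin p → Fin p → ℝ) → ℝ) (j : Fin K)
    (m : Fin p → ℝ) (d : Fin p → Fin p → ℝ) : Fin p → Fin p → ℝ :=
  fun k l => fderiv ℝ (fun d' => f j m d') d (Pi.single k (Pi.single l 1))

/-- Hessian in `m` of `f_j`, as a `p × p` matrix (matrix-valued `d`). -/
def hessMm (f : Fin K → (Fin p → ℝ) → (Fin p → Fin p → ℝ) → ℝ) (j : Fin K)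
    (m : Fin p → ℝ) (d : Fin p → Fin p → ℝ) : Fin p → Fin p → ℝ :=
  fun k l =>
    fderiv ℝ (fun m' => fderiv ℝ (fun m'' => f j m'' d) m' (Pi.single l 1)) m (Pi.single k 1)

/-- The learning premium `L^λ(m,d) ∈ ℝ^K` in the case where the `d`-variable is a
`p × p` matrix, parametrised by the softmax `nuF` and its derivative `etaF`
(both already evaluated at scale `λ`), with `σσᵀ` supplied as `ssT`. -/
def Lmat (nuF : (Fin K → ℝ) → Fin K → ℝ) (etaF : (Fin K → ℝ) → Fin K → Fin K → ℝ)
    (lam : ℝ) (f : Fin K → (Fin p → ℝ) → (Fin p → Fin p → ℝ) → ℝ)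
    (μ : Fin K → (Fin p → ℝ) → (Fin p → Fin p → ℝ) → Fin p → ℝ)
    (b ssT : Fin K → (Fin p → ℝ) → (Fin p → Fin p → ℝ) → Fin p → Fin p → ℝ)
    (m : Fin p → ℝ) (d : Fin p → Fin p → ℝ) : Fin K → ℝ :=
  fun i =>
    (∑ k, ∑ l, (∑ j, nuF (fun j' => f j' m d) j * gradDm f j m d k l) * b i m d k l) +
    (∑ k, (∑ j, nuF (fun j' => f j' m d) j * gradMm f j m d k) * μ i m d k) +
    (1 / 2) * ∑ k, ∑ l,
      ((∑ j, nuF (fun j' => f j' m d) j * hessMm f j m d k l) +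
        lam⁻¹ * ∑ j, ∑ j', etaF (fun j'' => f j'' m d) j j' *
          gradMm f j m d k * gradMm f j' m d l) *
      ssT i m d k l

/-- Polynomial growth of `r` together with its first two derivatives. -/
def PolyGrowth2 (r : ℝ → ℝ) : Prop :=
  ∃ (C : ℝ) (n : ℕ), ∀ x : ℝ,
    |r x| ≤ C * (1 + |x|) ^ n ∧ |deriv r x| ≤ C * (1 + |x|) ^ n ∧
    |deriv (deriv r) x| ≤ C * (1 + |x|) ^ n

end ARC
namespace ARC

/-- Shannon softmax `ν^λ_j(a) = e^{a_j/λ} / ∑_k e^{a_k/λ}`. -/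
def nuSh {K : ℕ} (lam : ℝ) (a : Fin K → ℝ) : Fin K → ℝ :=
  fun j => Real.exp (a j / lam) / ∑ k, Real.exp (a k / lam)

/-- Shannon `η^λ_{jk}(a) = ν^λ_j(a)(1(j=k) - ν^λ_k(a))`. -/
def etaSh {K : ℕ} (lam : ℝ) (a : Fin K → ℝ) : Fin K → Fin K → ℝ :=
  fun j k => nuSh lam a j * ((if j = k then 1 else 0) - nuSh lam a k)

end ARC


namespace ARC
open Real Filter Topology
lemma gauss_nonneg (x : ℝ) : 0 ≤ gauss x := by
  unfold gauss; positivity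

lemma continuous_gauss : Continuous gauss := by
  unfold gauss
  exact continuous_const.mul (Real.continuous_exp.comp (by continuity))

lemma hasDerivAt_gauss (x : ℝ) : HasDerivAt gauss (-x * gauss x) x := by
  have h1 : HasDerivAt (fun y : ℝ => -y ^ 2 / 2) (-x) x := by
    have := ((hasDerivAt_pow 2 x).neg).div_const 2
    simpa using this.congr_deriv (by ring)
  have h2 : HasDerivAt (fun y : ℝ => Real.exp (-y ^ 2 / 2))
      (Real.exp (-x ^ 2 / 2) * (-x)) x := (Real.hasDerivAt_exp _).comp x h1
  have := h2.const_mul ((Real.sqrt (2 * Real.pi))⁻¹)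
  unfold gauss
  exact this.congr_deriv (by ring)

lemma poly_gauss_le (n : ℕ) (x : ℝ) :
    (1 + |x|) ^ n * gauss x ≤
      ((Real.sqrt (2 * Real.pi))⁻¹ * Real.exp ((n : ℝ) ^ 2)) * Real.exp (-(1/4) * x ^ 2) := by
  unfold gauss
  have h1 : (1 + |x|) ^ n ≤ Real.exp ((n : ℝ) * |x|) := by
    calc (1 + |x|) ^ n ≤ (Real.exp |x|) ^ n := by
          apply pow_le_pow_left₀ (by positivity)
          linarith [Real.add_one_le_exp |x|]
      _ = Real.exp ((n : ℝ) * |x|) := by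
          rw [← Real.exp_nat_mul]
  have h2 : Real.exp ((n : ℝ) * |x|) * Real.exp (-x ^ 2 / 2)
      ≤ Real.exp ((n : ℝ) ^ 2) * Real.exp (-(1/4) * x ^ 2) := by
    rw [← Real.exp_add, ← Real.exp_add]
    apply Real.exp_le_exp.mpr
    have : 0 ≤ (|x| / 2 - (n : ℝ)) ^ 2 := sq_nonneg _
    have hx : |x| ^ 2 = x ^ 2 := sq_abs x
    nlinarith
  calc (1 + |x|) ^ n * ((Real.sqrt (2 * Real.pi))⁻¹ * Real.exp (-x ^ 2 / 2))
      ≤ Real.exp ((n:ℝ) * |x|) * ((Real.sqrt (2 * Real.pi))⁻¹ * Real.exp (-x ^ 2 / 2)) := by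
        apply mul_le_mul_of_nonneg_right h1 (by positivity)
    _ = (Real.sqrt (2 * Real.pi))⁻¹ * (Real.exp ((n:ℝ) * |x|) * Real.exp (-x ^ 2 / 2)) := by ring
    _ ≤ (Real.sqrt (2 * Real.pi))⁻¹ * (Real.exp ((n : ℝ) ^ 2) * Real.exp (-(1/4) * x ^ 2)) := by
        apply mul_le_mul_of_nonneg_left h2 (by positivity)
    _ = _ := by ring

lemma integrable_poly_gauss (n : ℕ) : Integrable (fun x : ℝ => (1 + |x|) ^ n * gauss x) := by
  apply Integrable.mono' (g := fun x : ℝ =>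
      ((Real.sqrt (2 * Real.pi))⁻¹ * Real.exp ((n : ℝ) ^ 2)) * Real.exp (-(1/4) * x ^ 2))
  · exact (integrable_exp_neg_mul_sq (by norm_num : (0:ℝ) < 1/4)).const_mul _
  · exact ((continuous_const.add continuous_abs).pow n).mul continuous_gauss |>.aestronglyMeasurable
  · refine Filter.Eventually.of_forall fun x => ?_
    rw [Real.norm_eq_abs, abs_of_nonneg (mul_nonneg (by positivity) (gauss_nonneg x))]
    exact poly_gauss_le n x

lemma integrable_poly_bound {ψ : ℝ → ℝ} (hψ : Continuous ψ) {C : ℝ} {n : ℕ}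
    (hb : ∀ x, |ψ x| ≤ C * (1 + |x|) ^ n) :
    Integrable (fun x => ψ x * gauss x) := by
  apply Integrable.mono' (g := fun x : ℝ => C * ((1 + |x|) ^ n * gauss x))
  · exact (integrable_poly_gauss n).const_mul C
  · exact (hψ.mul continuous_gauss).aestronglyMeasurable
  · refine Filter.Eventually.of_forall fun x => ?_
    rw [Real.norm_eq_abs, abs_mul, abs_of_nonneg (gauss_nonneg x)]
    calc |ψ x| * gauss x ≤ (C * (1 + |x|) ^ n) * gauss x :=
          mul_le_mul_of_nonneg_right (hb x) (gauss_nonneg x)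
      _ = C * ((1 + |x|) ^ n * gauss x) := by ring

lemma tendsto_exp_quarter_sq_atTop :
    Tendsto (fun x : ℝ => Real.exp (-(1/4) * x ^ 2)) atTop (𝓝 0) := by
  apply Real.tendsto_exp_atBot.comp
  have h : Tendsto (fun x : ℝ => (1/4 : ℝ) * x ^ 2) atTop atTop :=
    (tendsto_pow_atTop (two_ne_zero)).const_mul_atTop (by norm_num)
  simpa [Function.comp_def, neg_mul] using tendsto_neg_atTop_atBot.comp h

lemma tendsto_exp_quarter_sq_atBot :
    Tendsto (fun x : ℝ => Real.exp (-(1/4) * x ^ 2)) atBot (𝓝 0) := by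
  have := tendsto_exp_quarter_sq_atTop.comp tendsto_neg_atBot_atTop
  refine this.congr fun x => by simp [neg_sq]

lemma tendsto_poly_gauss {ψ : ℝ → ℝ} {C : ℝ} {n : ℕ}
    (hb : ∀ x, |ψ x| ≤ C * (1 + |x|) ^ n) (l : Filter ℝ)
    (hl : Tendsto (fun x : ℝ => Real.exp (-(1/4) * x ^ 2)) l (𝓝 0)) :
    Tendsto (fun x => ψ x * gauss x) l (𝓝 0) := by
  have hC : 0 ≤ C := le_trans (abs_nonneg (ψ 0)) (by simpa using hb 0)
  apply squeeze_zero_norm (a := fun x =>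
    (C * ((Real.sqrt (2 * Real.pi))⁻¹ * Real.exp ((n : ℝ) ^ 2))) * Real.exp (-(1/4) * x ^ 2))
  · intro x
    rw [Real.norm_eq_abs, abs_mul, abs_of_nonneg (gauss_nonneg x)]
    calc |ψ x| * gauss x ≤ (C * (1 + |x|) ^ n) * gauss x :=
          mul_le_mul_of_nonneg_right (hb x) (gauss_nonneg x)
      _ = C * ((1 + |x|) ^ n * gauss x) := by ring
      _ ≤ C * (((Real.sqrt (2 * Real.pi))⁻¹ * Real.exp ((n : ℝ) ^ 2)) * Real.exp (-(1/4) * x ^ 2)) :=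
          mul_le_mul_of_nonneg_left (poly_gauss_le n x) hC
      _ = _ := by ring
  · simpa using hl.const_mul (C * ((Real.sqrt (2 * Real.pi))⁻¹ * Real.exp ((n : ℝ) ^ 2)))

/-- Gaussian integration by parts. -/
lemma integral_ibp {ψ ψ' : ℝ → ℝ} (hd : ∀ x, HasDerivAt ψ (ψ' x) x)
    (hc' : Continuous ψ') {C : ℝ} {n : ℕ}
    (hb : ∀ x, |ψ x| ≤ C * (1 + |x|) ^ n) (hb' : ∀ x, |ψ' x| ≤ C * (1 + |x|) ^ n) :
    ∫ x, ψ x * (x * gauss x) = ∫ x, ψ' x * gauss x := by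
  have hC : 0 ≤ C := le_trans (abs_nonneg (ψ 0)) (by simpa using hb 0)
  have hcψ : Continuous ψ := continuous_iff_continuousAt.2 fun x => (hd x).continuousAt
  have hdu : ∀ x, HasDerivAt (fun x => ψ x * gauss x)
      (ψ' x * gauss x - ψ x * (x * gauss x)) x := by
    intro x
    have := (hd x).mul (hasDerivAt_gauss x)
    exact this.congr_deriv (by ring)
  have I1 : Integrable (fun x => ψ' x * gauss x) := integrable_poly_bound hc' hb'
  have hb2 : ∀ x, |ψ x * x| ≤ C * (1 + |x|) ^ (n+1) := by
    intro x
    rw [abs_mul, pow_succ]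
    calc |ψ x| * |x| ≤ (C * (1+|x|)^n) * (1 + |x|) := by
          apply mul_le_mul (hb x) (by linarith [abs_nonneg x]) (abs_nonneg x) (by positivity)
      _ = C * ((1+|x|)^n * (1+|x|)) := by ring
  have I2 : Integrable (fun x => ψ x * (x * gauss x)) := by
    have := integrable_poly_bound (ψ := fun x => ψ x * x) (hcψ.mul continuous_id) hb2
    simp only [mul_assoc] at this
    exact this
  have Iu : Integrable (fun x => ψ' x * gauss x - ψ x * (x * gauss x)) := I1.sub I2
  have ht : Tendsto (fun x => ψ x * gauss x) atTop (𝓝 0) :=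
    tendsto_poly_gauss hb _ tendsto_exp_quarter_sq_atTop
  have hbt : Tendsto (fun x => ψ x * gauss x) atBot (𝓝 0) :=
    tendsto_poly_gauss hb _ tendsto_exp_quarter_sq_atBot
  have hIoi : ∫ x in Set.Ioi (0:ℝ), (ψ' x * gauss x - ψ x * (x * gauss x))
      = 0 - ψ 0 * gauss 0 :=
    integral_Ioi_of_hasDerivAt_of_tendsto' (fun x _ => hdu x) Iu.integrableOn ht
  have hIic : ∫ x in Set.Iic (0:ℝ), (ψ' x * gauss x - ψ x * (x * gauss x))
      = ψ 0 * gauss 0 - 0 :=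
    integral_Iic_of_hasDerivAt_of_tendsto' (fun x _ => hdu x) Iu.integrableOn hbt
  have hsum := intervalIntegral.integral_Iic_add_Ioi (b := (0:ℝ)) Iu.integrableOn Iu.integrableOn
  have h0 : (∫ x, (ψ' x * gauss x - ψ x * (x * gauss x))) = 0 := by
    rw [← hsum, hIic, hIoi]; ring
  rw [integral_sub I1 I2] at h0
  linarith

/-- Uniform polynomial bound for affine compositions. -/
lemma key_affine_bound {χ : ℝ → ℝ} {C M : ℝ} {n : ℕ} (hC : 0 ≤ C)
    (hb : ∀ y, |χ y| ≤ C * (1 + |y|) ^ n) {t s x : ℝ}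
    (hM : 1 + |t| + |s| * |x| ≤ M * (1 + |x|)) :
    |χ (t + s * x)| ≤ (C * M ^ n) * (1 + |x|) ^ n := by
  have hM0 : 0 ≤ M := by
    nlinarith [abs_nonneg t, abs_nonneg s, abs_nonneg x,
      mul_nonneg (abs_nonneg s) (abs_nonneg x)]
  calc |χ (t + s*x)| ≤ C * (1 + |t + s*x|)^n := hb _
    _ ≤ C * (M * (1+|x|))^n := by
        apply mul_le_mul_of_nonneg_left _ hC
        apply pow_le_pow_left₀ (by positivity)
        have h1 : |t + s*x| ≤ |t| + |s| * |x| := by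
          rw [← abs_mul]; exact abs_add_le _ _
        linarith
    _ = (C * M^n) * (1+|x|)^n := by rw [mul_pow]; ring

/-- Differentiation under the integral sign: shift parameter. -/
lemma hasDerivAt_integral_gauss_shift {φ φ' : ℝ → ℝ}
    (hd : ∀ y, HasDerivAt φ (φ' y) y) (hc' : Continuous φ') {C : ℝ} {n : ℕ}
    (hb : ∀ y, |φ y| ≤ C * (1 + |y|) ^ n) (hb' : ∀ y, |φ' y| ≤ C * (1 + |y|) ^ n)
    (s a : ℝ) :
    HasDerivAt (fun t => ∫ x, φ (t + s * x) * gauss x)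
      (∫ x, φ' (a + s * x) * gauss x) a := by
  have hC : 0 ≤ C := le_trans (abs_nonneg (φ 0)) (by simpa using hb 0)
  have hcφ : Continuous φ := continuous_iff_continuousAt.2 fun x => (hd x).continuousAt
  set M : ℝ := 2 + |a| + |s| with hMdef
  have hlin : ∀ t x : ℝ, |t - a| < 1 → 1 + |t| + |s| * |x| ≤ M * (1 + |x|) := by
    intro t x ht
    have h2 : |t| ≤ |a| + 1 := by
      have := abs_sub_abs_le_abs_sub t a; linarith
    have hx : |s| * |x| ≤ M * |x| := by
      apply mul_le_mul_of_nonneg_right _ (abs_nonneg x)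
      simp only [hMdef]; linarith [abs_nonneg a]
    simp only [hMdef] at hx ⊢
    nlinarith [abs_nonneg x, abs_nonneg a, abs_nonneg s, abs_nonneg t, mul_nonneg (abs_nonneg a) (abs_nonneg x)]
  refine (hasDerivAt_integral_of_dominated_loc_of_deriv_le (Metric.ball_mem_nhds a one_pos)
    (F := fun t x => φ (t + s*x) * gauss x) (F' := fun t x => φ' (t + s*x) * gauss x)
    (bound := fun x => (C * M^n) * ((1+|x|)^n * gauss x)) ?_ ?_ ?_ ?_ ?_ ?_).2
  · exact Filter.Eventually.of_forall fun t =>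
      ((hcφ.comp (by continuity)).mul continuous_gauss).aestronglyMeasurable
  · apply integrable_poly_bound (hcφ.comp (by continuity))
      (C := C * M^n) (n := n)
    intro x
    exact key_affine_bound hC hb (hlin a x (by simp))
  · exact ((hc'.comp (by continuity)).mul continuous_gauss).aestronglyMeasurable
  · refine Filter.Eventually.of_forall fun x => fun t htb => ?_
    rw [Real.norm_eq_abs, abs_mul, abs_of_nonneg (gauss_nonneg x)]
    have hkey := key_affine_bound hC hb'
      (hlin t x (by rwa [Metric.mem_ball, Real.dist_eq] at htb))
    calc |φ' (t+s*x)| * gauss x ≤ ((C*M^n) * (1+|x|)^n) * gauss x :=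
          mul_le_mul_of_nonneg_right hkey (gauss_nonneg x)
      _ = (C * M^n) * ((1+|x|)^n * gauss x) := by ring
  · exact (integrable_poly_gauss n).const_mul _
  · refine Filter.Eventually.of_forall fun x => fun t _ => ?_
    have h1 : HasDerivAt (fun t : ℝ => t + s*x) 1 t := (hasDerivAt_id t).add_const _
    have := ((hd (t+s*x)).comp t h1).mul_const (gauss x)
    simpa [Function.comp] using this

/-- Differentiation under the integral sign: scale parameter. -/
lemma hasDerivAt_integral_gauss_scale {φ φ' : ℝ → ℝ}
    (hd : ∀ y, HasDerivAt φ (φ' y) y) (hc' : Continuous φ') {C : ℝ} {n : ℕ}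
    (hb : ∀ y, |φ y| ≤ C * (1 + |y|) ^ n) (hb' : ∀ y, |φ' y| ≤ C * (1 + |y|) ^ n)
    (a s₀ : ℝ) :
    HasDerivAt (fun t => ∫ x, φ (a + t * x) * gauss x)
      (∫ x, φ' (a + s₀ * x) * x * gauss x) s₀ := by
  have hC : 0 ≤ C := le_trans (abs_nonneg (φ 0)) (by simpa using hb 0)
  have hcφ : Continuous φ := continuous_iff_continuousAt.2 fun x => (hd x).continuousAt
  set M : ℝ := 2 + |a| + |s₀| with hMdef
  have hlin : ∀ t x : ℝ, |t - s₀| < 1 → 1 + |a| + |t| * |x| ≤ M * (1 + |x|) := by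
    intro t x ht
    have h2 : |t| ≤ |s₀| + 1 := by
      have := abs_sub_abs_le_abs_sub t s₀; linarith
    have hx : |t| * |x| ≤ M * |x| := by
      apply mul_le_mul_of_nonneg_right _ (abs_nonneg x)
      simp only [hMdef]; linarith [abs_nonneg a]
    simp only [hMdef] at hx ⊢
    nlinarith [abs_nonneg x, abs_nonneg a, abs_nonneg s₀, abs_nonneg t, mul_nonneg (abs_nonneg a) (abs_nonneg x)]
  refine (hasDerivAt_integral_of_dominated_loc_of_deriv_le (Metric.ball_mem_nhds s₀ one_pos)
    (F := fun t x => φ (a + t*x) * gauss x) (F' := fun t x => φ' (a + t*x) * x * gauss x)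
    (bound := fun x => (C * M^n) * ((1+|x|)^(n+1) * gauss x)) ?_ ?_ ?_ ?_ ?_ ?_).2
  · exact Filter.Eventually.of_forall fun t =>
      ((hcφ.comp (by continuity)).mul continuous_gauss).aestronglyMeasurable
  · apply integrable_poly_bound (hcφ.comp (by continuity))
      (C := C * M^n) (n := n)
    intro x
    have h1 : |a + s₀ * x| = |s₀ * x + a| := by rw [add_comm]
    exact key_affine_bound hC hb (t := a) (s := s₀) (x := x) (by
      have := hlin s₀ x (by simp)
      calc 1 + |a| + |s₀| * |x| = 1 + |a| + |s₀| * |x| := rfl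
        _ ≤ M * (1 + |x|) := this)
  · exact (((hc'.comp (by continuity)).mul continuous_id).mul continuous_gauss).aestronglyMeasurable
  · refine Filter.Eventually.of_forall fun x => fun t htb => ?_
    rw [Real.norm_eq_abs, abs_mul, abs_mul, abs_of_nonneg (gauss_nonneg x)]
    have hkey : |φ' (a + t*x)| ≤ (C*M^n) * (1+|x|)^n := by
      have := key_affine_bound hC hb' (t := a) (s := t) (x := x)
        (hlin t x (by rwa [Metric.mem_ball, Real.dist_eq] at htb))
      exact this
    have hstep : |φ' (a + t*x)| * |x| ≤ (C*M^n) * (1+|x|)^(n+1) := by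
      calc |φ' (a + t*x)| * |x| ≤ ((C*M^n) * (1+|x|)^n) * (1 + |x|) := by
            apply mul_le_mul hkey (by linarith [abs_nonneg x]) (abs_nonneg x) (by positivity)
        _ = (C*M^n) * (1+|x|)^(n+1) := by rw [pow_succ]; ring
    calc |φ' (a + t*x)| * |x| * gauss x ≤ ((C*M^n) * (1+|x|)^(n+1)) * gauss x :=
          mul_le_mul_of_nonneg_right hstep (gauss_nonneg x)
      _ = (C * M^n) * ((1+|x|)^(n+1) * gauss x) := by ring
  · exact (integrable_poly_gauss (n+1)).const_mul _
  · refine Filter.Eventually.of_forall fun x => fun t _ => ?_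
    have h1 : HasDerivAt (fun t : ℝ => a + t*x) x t := by
      simpa using ((hasDerivAt_id t).mul_const x).const_add a
    have := ((hd (a+t*x)).comp t h1).mul_const (gauss x)
    simpa [Function.comp, mul_assoc] using this

section layer3
variable {r : ℝ → ℝ} (hr : ContDiff ℝ 2 r) (hg : PolyGrowth2 r)

lemma deriv_facts (hr : ContDiff ℝ 2 r) :
    (∀ y, HasDerivAt r (deriv r y) y) ∧ Continuous (deriv r) ∧
    (∀ y, HasDerivAt (deriv r) (deriv (deriv r) y) y) ∧ Continuous (deriv (deriv r)) := by
  have hr2 : ContDiff ℝ (1+1) r := by exact_mod_cast hr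
  have hr' : ContDiff ℝ 1 (deriv r) := (contDiff_succ_iff_deriv.mp hr2).2.2
  refine ⟨fun y => ((hr.differentiable (by norm_num)) y).hasDerivAt,
    hr.continuous_deriv (by norm_num),
    fun y => ((hr'.differentiable one_ne_zero) y).hasDerivAt,
    hr'.continuous_deriv le_rfl⟩

include hr hg in
lemma hasDerivAt_blockA (s a : ℝ) :
    HasDerivAt (fun t => ∫ x, r (t + s * x) * gauss x)
      (∫ x, deriv r (a + s * x) * gauss x) a := by
  obtain ⟨C, n, hgr⟩ := hg
  obtain ⟨hd1, hc1, hd2, hc2⟩ := deriv_facts hr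
  exact hasDerivAt_integral_gauss_shift hd1 hc1 (fun x => (hgr x).1)
    (fun x => (hgr x).2.1) s a

include hr hg in
lemma hasDerivAt_blockB (s a : ℝ) :
    HasDerivAt (fun t => ∫ x, deriv r (t + s * x) * gauss x)
      (∫ x, deriv (deriv r) (a + s * x) * gauss x) a := by
  obtain ⟨C, n, hgr⟩ := hg
  obtain ⟨hd1, hc1, hd2, hc2⟩ := deriv_facts hr
  exact hasDerivAt_integral_gauss_shift hd2 hc2 (fun x => (hgr x).2.1)
    (fun x => (hgr x).2.2) s a

include hr hg in
lemma hasDerivAt_blockC (a : ℝ) {v : ℝ} (hv : 0 < v) :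
    HasDerivAt (fun w => ∫ x, r (a + Real.sqrt w * x) * gauss x)
      ((∫ x, deriv (deriv r) (a + Real.sqrt v * x) * gauss x) / 2) v := by
  obtain ⟨C, n, hgr⟩ := hg
  obtain ⟨hd1, hc1, hd2, hc2⟩ := deriv_facts hr
  have hC : 0 ≤ C := le_trans (abs_nonneg (r 0)) (by simpa using (hgr 0).1)
  set q : ℝ := Real.sqrt v with hq
  have hq0 : 0 < q := Real.sqrt_pos.2 hv
  have h3 : HasDerivAt (fun t => ∫ x, r (a + t * x) * gauss x)
      (∫ x, deriv r (a + q * x) * x * gauss x) q :=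
    hasDerivAt_integral_gauss_scale hd1 hc1 (fun x => (hgr x).1) (fun x => (hgr x).2.1) a q
  have hsq : HasDerivAt Real.sqrt (1 / (2 * q)) v := (Real.hasDerivAt_sqrt hv.ne')
  have hcomp := h3.comp v hsq
  -- identify the derivative via integration by parts
  have hM : ∀ x : ℝ, 1 + |a| + |q| * |x| ≤ (1 + |a| + q) * (1 + |x|) := by
    intro x
    rw [abs_of_nonneg hq0.le]
    have h0 : (1 + |a| + q) * (1 + |x|) = (1 + |a| + q) + (1 + |a| + q) * |x| := by ring
    nlinarith [abs_nonneg x, abs_nonneg a]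
  have hψd : ∀ x, HasDerivAt (fun x => deriv r (a + q * x))
      (q * deriv (deriv r) (a + q * x)) x := by
    intro x
    have hin : HasDerivAt (fun x : ℝ => a + q * x) q x := by
      simpa using ((hasDerivAt_id x).const_mul q).const_add a
    simpa [mul_comm, Function.comp_def] using (hd2 (a + q * x)).comp x hin
  have hbψ : ∀ x, |deriv r (a + q * x)| ≤
      ((C * (1 + |a| + q) ^ n) * (1 + q)) * (1 + |x|) ^ n := by
    intro x
    have := key_affine_bound hC (fun y => (hgr y).2.1) (hM x)
    calc |deriv r (a + q * x)| ≤ (C * (1 + |a| + q) ^ n) * (1 + |x|) ^ n := this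
      _ ≤ ((C * (1 + |a| + q) ^ n) * (1 + q)) * (1 + |x|) ^ n := by
          apply mul_le_mul_of_nonneg_right _ (by positivity)
          nlinarith [pow_nonneg (by positivity : (0:ℝ) ≤ 1 + |a| + q) n, hq0.le,
            mul_nonneg hC (pow_nonneg (by positivity : (0:ℝ) ≤ 1 + |a| + q) n)]
  have hbψ' : ∀ x, |q * deriv (deriv r) (a + q * x)| ≤
      ((C * (1 + |a| + q) ^ n) * (1 + q)) * (1 + |x|) ^ n := by
    intro x
    rw [abs_mul, abs_of_nonneg hq0.le]
    have := key_affine_bound hC (fun y => (hgr y).2.2) (hM x)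
    calc q * |deriv (deriv r) (a + q * x)| ≤ q * ((C * (1 + |a| + q) ^ n) * (1 + |x|) ^ n) :=
          mul_le_mul_of_nonneg_left this hq0.le
      _ ≤ ((C * (1 + |a| + q) ^ n) * (1 + q)) * (1 + |x|) ^ n := by
          rw [show q * ((C * (1 + |a| + q) ^ n) * (1 + |x|) ^ n)
              = (q * (C * (1 + |a| + q) ^ n)) * (1 + |x|) ^ n by ring]
          apply mul_le_mul_of_nonneg_right _ (by positivity)
          nlinarith [mul_nonneg hC (pow_nonneg (by positivity : (0:ℝ) ≤ 1 + |a| + q) n)]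
  have hibp := integral_ibp hψd (continuous_const.mul (hc2.comp (by continuity))) hbψ hbψ'
  have hval : (∫ x, deriv r (a + q * x) * x * gauss x) * (1 / (2 * q))
      = (∫ x, deriv (deriv r) (a + q * x) * gauss x) / 2 := by
    have e1 : (∫ x, deriv r (a + q * x) * x * gauss x)
        = ∫ x, deriv r (a + q * x) * (x * gauss x) := by
      congr 1; funext x; ring
    have e2 : (∫ x, q * deriv (deriv r) (a + q * x) * gauss x)
        = q * ∫ x, deriv (deriv r) (a + q * x) * gauss x := by
      rw [← integral_const_mul]
      congr 1; funext x; ring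
    rw [e1, hibp, e2]
    field_simp
  have : ((fun t => ∫ x, r (a + t * x) * gauss x) ∘ Real.sqrt)
      = fun w => ∫ x, r (a + Real.sqrt w * x) * gauss x := rfl
  rw [this, hval] at hcomp
  exact hcomp

end layer3
lemma sum_swap3 {α β γ : Type*} [Fintype α] [Fintype β] [Fintype γ]
    (F : α → β → γ → ℝ) :
    ∑ a, ∑ b, ∑ c, F a b c = ∑ c, ∑ a, ∑ b, F a b c := by
  calc ∑ a, ∑ b, ∑ c, F a b c = ∑ a, ∑ c, ∑ b, F a b c :=
        Finset.sum_congr rfl fun a _ => Finset.sum_comm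
    _ = ∑ c, ∑ a, ∑ b, F a b c := Finset.sum_comm

lemma blockQuad {K p : ℕ} (ν h : Fin K → ℝ) (cc : Fin K → Fin p → ℝ)
    (w : Fin p → ℝ) (ρ : ℝ) (T : Fin K → ℝ)
    (hT : ∀ j, (∑ k, cc j k * w k) = T j) :
    ∑ k, ∑ l, (∑ j, ν j * (h j * (cc j k * cc j l))) * (w k * w l * ρ)
      = ρ * ∑ j, ν j * h j * T j ^ 2 := by
  simp only [Finset.sum_mul]
  rw [sum_swap3 (fun k l j => ν j * (h j * (cc j k * cc j l)) * (w k * w l * ρ))]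
  rw [Finset.mul_sum]
  refine Finset.sum_congr rfl fun j _ => ?_
  rw [← hT j, sq]
  simp only [Finset.mul_sum, Finset.sum_mul]
  refine Finset.sum_congr rfl fun k _ => ?_
  refine Finset.sum_congr rfl fun l _ => ?_
  ring

lemma eta_quad {K : ℕ} (ν a : Fin K → ℝ) :
    ∑ j, ∑ j', (ν j * ((if j = j' then 1 else 0) - ν j')) * (a j * a j')
      = (∑ j, ν j * a j ^ 2) - (∑ j, ν j * a j) ^ 2 := by
  have key : ∀ j j', (ν j * ((if j = j' then 1 else 0) - ν j')) * (a j * a j')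
      = (if j' = j then ν j * a j ^ 2 else 0) - (ν j * a j) * (ν j' * a j') := by
    intro j j'
    by_cases h : j = j'
    · subst h; simp; ring
    · have h' : ¬ (j' = j) := fun hh => h hh.symm
      simp [h, h']
      ring
  simp only [key, Finset.sum_sub_distrib]
  congr 1
  · refine Finset.sum_congr rfl fun j _ => ?_
    simp [Finset.sum_ite_eq]
  · rw [sq, Finset.sum_mul_sum]

lemma blockEta {K p : ℕ} (ν g : Fin K → ℝ) (cc : Fin K → Fin p → ℝ)
    (w : Fin p → ℝ) (ρ : ℝ) (T : Fin K → ℝ)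
    (hT : ∀ j, (∑ k, cc j k * w k) = T j) :
    ∑ k, ∑ l, (∑ j, ∑ j', (ν j * ((if j = j' then 1 else 0) - ν j'))
        * (g j * cc j k) * (g j' * cc j' l)) * (w k * w l * ρ)
      = ρ * ((∑ j, ν j * g j ^ 2 * T j ^ 2) - (∑ j, ν j * g j * T j) ^ 2) := by
  have step1 : ∑ k, ∑ l, (∑ j, ∑ j', (ν j * ((if j = j' then 1 else 0) - ν j'))
        * (g j * cc j k) * (g j' * cc j' l)) * (w k * w l * ρ)
      = ∑ j, ∑ j', (ν j * ((if j = j' then 1 else 0) - ν j'))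
          * ((g j * T j) * (g j' * T j')) * ρ := by
    simp only [Finset.sum_mul]
    rw [sum_swap3 (fun k l j => ∑ j', (ν j * ((if j = j' then 1 else 0) - ν j'))
        * (g j * cc j k) * (g j' * cc j' l) * (w k * w l * ρ))]
    refine Finset.sum_congr rfl fun j _ => ?_
    rw [sum_swap3 (fun k l j' => (ν j * ((if j = j' then 1 else 0) - ν j'))
        * (g j * cc j k) * (g j' * cc j' l) * (w k * w l * ρ))]
    refine Finset.sum_congr rfl fun j' _ => ?_
    rw [← hT j, ← hT j']
    simp only [Finset.mul_sum, Finset.sum_mul]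
    rw [Finset.sum_comm]
    refine Finset.sum_congr rfl fun k _ => ?_
    refine Finset.sum_congr rfl fun l _ => ?_
    ring
  rw [step1]
  have step2 : ∑ j, ∑ j', (ν j * ((if j = j' then 1 else 0) - ν j'))
          * ((g j * T j) * (g j' * T j')) * ρ
      = ρ * ∑ j, ∑ j', (ν j * ((if j = j' then 1 else 0) - ν j'))
          * ((g j * T j) * (g j' * T j')) := by
    rw [Finset.mul_sum]
    refine Finset.sum_congr rfl fun j _ => ?_
    rw [Finset.mul_sum]
    refine Finset.sum_congr rfl fun j' _ => ?_
    ring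
  rw [step2, eta_quad ν (fun j => g j * T j)]
  congr 1
  congr 1
  · refine Finset.sum_congr rfl fun j _ => ?_
    ring
  · congr 1
    refine Finset.sum_congr rfl fun j _ => ?_
    ring

lemma fderiv_comp_linear_m {p : ℕ} (cv : Fin p → ℝ) (G : ℝ → ℝ) {g' : ℝ} {m : Fin p → ℝ}
    (hG : HasDerivAt G g' (∑ k', cv k' * m k')) (k : Fin p) :
    fderiv ℝ (fun m' => G (∑ k', cv k' * m' k')) m (Pi.single k 1) = g' * cv k := by
  set L : (Fin p → ℝ) →L[ℝ] ℝ :=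
    ∑ k', cv k' • (ContinuousLinearMap.proj (R := ℝ) (φ := fun _ : Fin p => ℝ) k') with hLdef
  have hL : ∀ v, L v = ∑ k', cv k' * v k' := by
    intro v
    simp [hLdef, ContinuousLinearMap.sum_apply, ContinuousLinearMap.smul_apply,
      ContinuousLinearMap.proj_apply, smul_eq_mul]
  have hfd : HasFDerivAt (fun m' => G (∑ k', cv k' * m' k')) (g' • L) m := by
    have h0 : HasFDerivAt (fun m' => G (L m')) (g' • L) m := by
      apply HasDerivAt.comp_hasFDerivAt
      · rw [hL]; exact hG
      · exact L.hasFDerivAt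
    refine h0.congr_of_eventuallyEq (Filter.Eventually.of_forall fun m' => ?_)
    show G (∑ k', cv k' * m' k') = G (L m')
    rw [hL]
  rw [hfd.fderiv]
  have hLs : L (Pi.single k 1) = cv k := by
    rw [hL]
    simp [Pi.single_apply]
  simp [hLs, smul_eq_mul]

lemma fderiv_comp_linear_d {p : ℕ} (cv cw : Fin p → ℝ) (H : ℝ → ℝ) {h' : ℝ}
    {dm : Fin p → Fin p → ℝ} (t : ℝ)
    (hH : HasDerivAt H h' ((∑ k', ∑ l', cv k' * dm k' l' * cw l') + t)) (k l : Fin p) :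
    fderiv ℝ (fun d' => H ((∑ k', ∑ l', cv k' * d' k' l' * cw l') + t)) dm
      (Pi.single k (Pi.single l 1)) = h' * (cv k * cw l) := by
  set Q : (Fin p → Fin p → ℝ) →L[ℝ] ℝ :=
    ∑ k', ∑ l', (cv k' * cw l') • ((ContinuousLinearMap.proj (R := ℝ)
        (φ := fun _ : Fin p => ℝ) l').comp (ContinuousLinearMap.proj (R := ℝ)
        (φ := fun _ : Fin p => Fin p → ℝ) k')) with hQdef
  have hQ : ∀ D : Fin p → Fin p → ℝ, Q D = ∑ k', ∑ l', cv k' * D k' l' * cw l' := by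
    intro D
    simp only [hQdef, ContinuousLinearMap.sum_apply, ContinuousLinearMap.smul_apply,
      ContinuousLinearMap.comp_apply, ContinuousLinearMap.proj_apply, smul_eq_mul]
    refine Finset.sum_congr rfl fun k' _ => Finset.sum_congr rfl fun l' _ => by ring
  have hfd : HasFDerivAt (fun d' => H ((∑ k', ∑ l', cv k' * d' k' l' * cw l') + t))
      (h' • Q) dm := by
    have h0 : HasFDerivAt (fun d' => H (Q d' + t)) (h' • Q) dm := by
      apply HasDerivAt.comp_hasFDerivAt
      · rw [hQ]; exact hH
      · exact (Q.hasFDerivAt).add_const t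
    refine h0.congr_of_eventuallyEq (Filter.Eventually.of_forall fun D => ?_)
    show H ((∑ k', ∑ l', cv k' * D k' l' * cw l') + t) = H (Q D + t)
    rw [hQ]
  rw [hfd.fderiv]
  have hQs : Q (Pi.single k (Pi.single l 1)) = cv k * cw l := by
    rw [hQ]
    simp only [Pi.single_apply, ite_apply, Pi.zero_apply]
    simp [Finset.sum_ite_eq, mul_ite, ite_mul]
  simp [hQs, smul_eq_mul]


lemma pull_const {p : ℕ} (t : ℝ) (F G : Fin p → Fin p → ℝ) :
    ∑ k, ∑ l, (t * F k l) * G k l = t * ∑ k, ∑ l, F k l * G k l := by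
  rw [Finset.mul_sum]
  refine Finset.sum_congr rfl fun k _ => ?_
  rw [Finset.mul_sum]
  exact Finset.sum_congr rfl fun l _ => by ring

lemma half_sum {K : ℕ} (ν h T : Fin K → ℝ) :
    ∑ j, ν j * (h j / 2) * T j ^ 2 = (∑ j, ν j * h j * T j ^ 2) / 2 := by
  rw [Finset.sum_div]
  exact Finset.sum_congr rfl fun j _ => by ring

end ARC

set_option maxHeartbeats 2000000 in
/-- Lemma A.6: explicit learning premium for the one-dimensional linear Gaussian bandit
with Shannon entropy. -/
theorem ARC.L_linear_bandit
    {K p : ℕ} (hK : 0 < K) (hp : 0 < p)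
    (m : Fin p → ℝ) (d : Fin p → Fin p → ℝ)
    (hdsym : ∀ k l, d k l = d l k)
    (hdpsd : ∀ v : Fin p → ℝ, 0 ≤ ∑ k, ∑ l, v k * d k l * v l)
    (c : Fin K → Fin p → ℝ) (Pprec : Fin K → ℝ) (hP : ∀ i, 0 < Pprec i)
    (rf : Fin K → ℝ → ℝ) (hrf : ∀ i, ContDiff ℝ 2 (rf i))
    (hgrowth : ∀ i, ARC.PolyGrowth2 (rf i))
    (f : Fin K → (Fin p → ℝ) → (Fin p → Fin p → ℝ) → ℝ)
    (hfdef : f = fun i m' d' => ∫ x : ℝ,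
      rf i ((∑ k, c i k * m' k) +
        Real.sqrt ((∑ k, ∑ l, c i k * d' k l * c i l) + (Pprec i)⁻¹) * x) * ARC.gauss x)
    (μ : Fin K → (Fin p → ℝ) → (Fin p → Fin p → ℝ) → Fin p → ℝ)
    (b ssT : Fin K → (Fin p → ℝ) → (Fin p → Fin p → ℝ) → Fin p → Fin p → ℝ)
    (hμ : μ = fun _ _ _ => 0)
    (hssT : ssT = fun i _ d' k l =>
      (∑ a, d' k a * c i a) * (∑ a, d' l a * c i a) *
        ((∑ k', ∑ l', c i k' * d' k' l' * c i l') + (Pprec i)⁻¹)⁻¹)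
    (hb : b = fun i m' d' k l => -(ssT i m' d' k l)) :
    ∀ (i : Fin K) (lam : ℝ), 0 < lam →
      ARC.Lmat (ARC.nuSh lam) (ARC.etaSh lam) lam f μ b ssT m d i =
        ((∑ k, ∑ l, c i k * d k l * c i l) + (Pprec i)⁻¹)⁻¹ / (2 * lam) *
          ((∑ j, ARC.nuSh lam (fun j' => f j' m d) j *
              (∫ x : ℝ, deriv (rf j) ((∑ k, c j k * m k) +
                Real.sqrt ((∑ k, ∑ l, c j k * d k l * c j l) + (Pprec j)⁻¹) * x) *
                ARC.gauss x) ^ 2 *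
              (∑ k, ∑ l, c i k * d k l * c j l) ^ 2) -
            (∑ j, ARC.nuSh lam (fun j' => f j' m d) j *
              (∫ x : ℝ, deriv (rf j) ((∑ k, c j k * m k) +
                Real.sqrt ((∑ k, ∑ l, c j k * d k l * c j l) + (Pprec j)⁻¹) * x) *
                ARC.gauss x) *
              (∑ k, ∑ l, c i k * d k l * c j l)) ^ 2) := by
  intro i lam hlam
  subst hμ hssT hb
  have hVpos : ∀ j : Fin K, 0 < (∑ k, ∑ l, c j k * d k l * c j l) + (Pprec j)⁻¹ := by
    intro j
    have h1 := hdpsd (c j)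
    have h2 := inv_pos.mpr (hP j)
    linarith
  have hgM : ∀ (j : Fin K) (k : Fin p), ARC.gradMm f j m d k
      = (∫ x, deriv (rf j) ((∑ k', c j k' * m k') +
          Real.sqrt ((∑ k', ∑ l', c j k' * d k' l' * c j l') + (Pprec j)⁻¹) * x)
          * ARC.gauss x) * c j k := by
    intro j k
    have hfm : (fun m' => f j m' d) = fun m' : Fin p → ℝ =>
        ∫ x, rf j ((∑ k', c j k' * m' k') +
          Real.sqrt ((∑ k', ∑ l', c j k' * d k' l' * c j l') + (Pprec j)⁻¹) * x)
          * ARC.gauss x := by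
      funext m'; simp only [hfdef]
    show fderiv ℝ (fun m' => f j m' d) m (Pi.single k 1) = _
    rw [hfm]
    exact ARC.fderiv_comp_linear_m (c j)
      (fun t => ∫ x, rf j (t +
        Real.sqrt ((∑ k', ∑ l', c j k' * d k' l' * c j l') + (Pprec j)⁻¹) * x) * ARC.gauss x)
      (ARC.hasDerivAt_blockA (hrf j) (hgrowth j) _ _) k
  have hhM : ∀ (j : Fin K) (k l : Fin p), ARC.hessMm f j m d k l
      = (∫ x, deriv (deriv (rf j)) ((∑ k', c j k' * m k') +
          Real.sqrt ((∑ k', ∑ l', c j k' * d k' l' * c j l') + (Pprec j)⁻¹) * x)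
          * ARC.gauss x) * (c j k * c j l) := by
    intro j k l
    show fderiv ℝ (fun m' => fderiv ℝ (fun m'' => f j m'' d) m' (Pi.single l 1)) m
        (Pi.single k 1) = _
    have hin : (fun m' => fderiv ℝ (fun m'' => f j m'' d) m' (Pi.single l 1))
        = fun m' : Fin p → ℝ => (∫ x, deriv (rf j) ((∑ k', c j k' * m' k') +
            Real.sqrt ((∑ k', ∑ l', c j k' * d k' l' * c j l') + (Pprec j)⁻¹) * x)
            * ARC.gauss x) * c j l := by
      funext m'
      have hfm : (fun m'' => f j m'' d) = fun m'' : Fin p → ℝ =>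
          ∫ x, rf j ((∑ k', c j k' * m'' k') +
            Real.sqrt ((∑ k', ∑ l', c j k' * d k' l' * c j l') + (Pprec j)⁻¹) * x)
            * ARC.gauss x := by
        funext m''; simp only [hfdef]
      rw [hfm]
      exact ARC.fderiv_comp_linear_m (c j)
        (fun t => ∫ x, rf j (t +
          Real.sqrt ((∑ k', ∑ l', c j k' * d k' l' * c j l') + (Pprec j)⁻¹) * x) * ARC.gauss x)
        (ARC.hasDerivAt_blockA (hrf j) (hgrowth j) _ _) l
    rw [hin]
    have hres := ARC.fderiv_comp_linear_m (c j)
      (fun t => (∫ x, deriv (rf j) (t +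
        Real.sqrt ((∑ k', ∑ l', c j k' * d k' l' * c j l') + (Pprec j)⁻¹) * x) * ARC.gauss x)
        * c j l)
      ((ARC.hasDerivAt_blockB (hrf j) (hgrowth j)
        (Real.sqrt ((∑ k', ∑ l', c j k' * d k' l' * c j l') + (Pprec j)⁻¹))
        (∑ k', c j k' * m k')).mul_const (c j l)) k
    rw [hres]
    ring
  have hgD : ∀ (j : Fin K) (k l : Fin p), ARC.gradDm f j m d k l
      = (∫ x, deriv (deriv (rf j)) ((∑ k', c j k' * m k') +
          Real.sqrt ((∑ k', ∑ l', c j k' * d k' l' * c j l') + (Pprec j)⁻¹) * x)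
          * ARC.gauss x) / 2 * (c j k * c j l) := by
    intro j k l
    have hfd2 : (fun d' => f j m d') = fun d' : Fin p → Fin p → ℝ =>
        ∫ x, rf j ((∑ k', c j k' * m k') +
          Real.sqrt ((∑ k', ∑ l', c j k' * d' k' l' * c j l') + (Pprec j)⁻¹) * x)
          * ARC.gauss x := by
      funext d'; simp only [hfdef]
    show fderiv ℝ (fun d' => f j m d') d (Pi.single k (Pi.single l 1)) = _
    rw [hfd2]
    exact ARC.fderiv_comp_linear_d (c j) (c j)
      (fun v => ∫ x, rf j ((∑ k', c j k' * m k') + Real.sqrt v * x) * ARC.gauss x)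
      ((Pprec j)⁻¹)
      (ARC.hasDerivAt_blockC (hrf j) (hgrowth j) _ (hVpos j)) k l
  have hT : ∀ j : Fin K, (∑ k, c j k * (∑ a, d k a * c i a))
      = ∑ k, ∑ l, c i k * d k l * c j l := by
    intro j
    simp only [Finset.mul_sum]
    rw [Finset.sum_comm]
    refine Finset.sum_congr rfl fun a _ => Finset.sum_congr rfl fun k _ => ?_
    rw [hdsym k a]
    ring
  simp only [ARC.Lmat, hgM, hhM, hgD, ARC.etaSh, Pi.zero_apply, mul_zero,
    Finset.sum_const_zero, add_zero, mul_neg, Finset.sum_neg_distrib, add_mul,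
    Finset.sum_add_distrib]
  have e1 := ARC.blockQuad (fun j => ARC.nuSh lam (fun j' => f j' m d) j)
      (fun j => (∫ x, deriv (deriv (rf j)) ((∑ k', c j k' * m k') +
          Real.sqrt ((∑ k', ∑ l', c j k' * d k' l' * c j l') + (Pprec j)⁻¹) * x)
          * ARC.gauss x) / 2)
      c (fun k => ∑ a, d k a * c i a)
      ((∑ k', ∑ l', c i k' * d k' l' * c i l') + (Pprec i)⁻¹)⁻¹
      (fun j => ∑ k, ∑ l, c i k * d k l * c j l) hT
  have e2 := ARC.blockQuad (fun j => ARC.nuSh lam (fun j' => f j' m d) j)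
      (fun j => (∫ x, deriv (deriv (rf j)) ((∑ k', c j k' * m k') +
          Real.sqrt ((∑ k', ∑ l', c j k' * d k' l' * c j l') + (Pprec j)⁻¹) * x)
          * ARC.gauss x))
      c (fun k => ∑ a, d k a * c i a)
      ((∑ k', ∑ l', c i k' * d k' l' * c i l') + (Pprec i)⁻¹)⁻¹
      (fun j => ∑ k, ∑ l, c i k * d k l * c j l) hT
  have e3 := ARC.blockEta (fun j => ARC.nuSh lam (fun j' => f j' m d) j)
      (fun j => (∫ x, deriv (rf j) ((∑ k', c j k' * m k') +
          Real.sqrt ((∑ k', ∑ l', c j k' * d k' l' * c j l') + (Pprec j)⁻¹) * x)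
          * ARC.gauss x))
      c (fun k => ∑ a, d k a * c i a)
      ((∑ k', ∑ l', c i k' * d k' l' * c i l') + (Pprec i)⁻¹)⁻¹
      (fun j => ∑ k, ∑ l, c i k * d k l * c j l) hT
  beta_reduce at e1 e2 e3
  rw [e1, e2, ARC.pull_const lam⁻¹, e3, ARC.half_sum]
  ring
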